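/- Let k ⊆ K be fields and n ≥ 0 an integer. Let g be an (n+1)×(n+1) matrix over K and let λ_1, …, λ_{n+1} be elements of K such that the family consisting of the (n+1)^2 entries of g together with λ_1, …, λ_{n+1} is algebraically independent over k. Then for every integer 0 ≤ m ≤ n+1, the (n+1)^2 entries of the matrix g·Diag(1,…,1,λ_{m+1},…,λ_{n+1}) form an algebraically independent family over k, where Diag(1,…,1,λ_{m+1},…,λ_{n+1}) is the diagonal matrix whose first m diagonal entries are 1 and whose remaining diagonal entries are λ_{m+1},…,λ_{n+1}. -/

import Mathlib

open MvPolynomial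

/-- Algebraic-independence formulation of Lemma 3.7(2): if the entries of `g` together
with `λ₁,…,λ_{n+1}` are algebraically independent over `k`, then for every
`0 ≤ m ≤ n+1` the entries of `g·Diag(1,…,1,λ_{m+1},…,λ_{n+1})` (first `m` diagonal
entries equal to `1`, remaining entries `λ_{m+1},…,λ_{n+1}`) are algebraically
independent over `k`. -/
theorem generic_partial_diagonal (k K : Type*) [Field k] [Field K] [Algebra k K]
    (n : ℕ) (g : Matrix (Fin (n + 1)) (Fin (n + 1)) K) (lam : Fin (n + 1) → K)
    (h : AlgebraicIndependent k
      (Sum.elim (fun p : Fin (n + 1) × Fin (n + 1) => g p.1 p.2) lam)) :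
    ∀ m : ℕ, m ≤ n + 1 →
      AlgebraicIndependent k
        (fun p : Fin (n + 1) × Fin (n + 1) =>
          (g * Matrix.diagonal (fun i : Fin (n + 1) =>
            if (i : ℕ) < m then 1 else lam i)) p.1 p.2) := by
  intro m _
  classical
  set ι := (Fin (n + 1) × Fin (n + 1))
  set κ := (ι ⊕ Fin (n + 1))
  -- the substitution σ : k[ι] → k[κ]
  set σ : MvPolynomial ι k →ₐ[k] MvPolynomial κ k :=
    aeval (fun p : ι => X (Sum.inl p) *
      (if (p.2 : ℕ) < m then 1 else X (Sum.inr p.2))) with hσ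
  -- σ is injective, via a left inverse into the fraction field
  have hσinj : Function.Injective σ := by
    set L := FractionRing (MvPolynomial κ k)
    set ξ : MvPolynomial κ k →+* L := algebraMap (MvPolynomial κ k) L
    have hξ : Function.Injective ξ := IsFractionRing.injective _ _
    set τ : MvPolynomial κ k →ₐ[k] L :=
      aeval (Sum.elim
        (fun p : ι => ξ (X (Sum.inl p)) *
          (if (p.2 : ℕ) < m then 1 else ξ (X (Sum.inr p.2)))⁻¹)
        (fun j : Fin (n + 1) => ξ (X (Sum.inr j)))) with hτ
    have key : ∀ P : MvPolynomial ι k, τ (σ P) = ξ (rename Sum.inl P) := by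
      intro P
      have : (τ.comp σ) = (AlgHom.comp
          { toRingHom := ξ, commutes' := fun r =>
              (IsScalarTower.algebraMap_apply k (MvPolynomial κ k) L r).symm }
          (rename (R := k) Sum.inl)) := by
        apply MvPolynomial.algHom_ext
        intro p
        simp only [AlgHom.comp_apply, hσ, hτ, aeval_X, rename_X, map_mul]
        by_cases hp : (p.2 : ℕ) < m
        · simp [hp, Sum.elim_inl]
        · have hx0 : ξ (X (Sum.inr p.2)) ≠ 0 := fun h0 => by
            simpa using hξ (h0.trans (map_zero ξ).symm)
          simp only [hp, if_false, Sum.elim_inl, map_mul]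
          rw [aeval_X, Sum.elim_inr, inv_mul_cancel_right₀ hx0]
          rfl
      simpa using DFunLike.congr_fun this P
    intro P Q hPQ
    have := key P ▸ key Q ▸ congrArg τ hPQ
    exact rename_injective _ Sum.inl_injective (hξ this)
  -- aeval of the new family is aeval (old family) ∘ σ
  have hcomp : (aeval (R := k)
      (fun p : ι =>
        (g * Matrix.diagonal (fun i : Fin (n + 1) =>
          if (i : ℕ) < m then 1 else lam i)) p.1 p.2)) =
      (aeval (Sum.elim (fun p : ι => g p.1 p.2) lam)).comp σ := by
    apply MvPolynomial.algHom_ext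
    intro p
    simp only [AlgHom.comp_apply, hσ, aeval_X, map_mul]
    rw [Matrix.mul_apply]
    rw [Finset.sum_eq_single p.2]
    · by_cases hp : (p.2 : ℕ) < m <;>
        simp [Matrix.diagonal_apply_eq, hp, Sum.elim_inl, Sum.elim_inr]
    · intro j _ hj
      simp [Matrix.diagonal_apply_ne _ hj]
    · simp
  rw [AlgebraicIndependent] at h ⊢
  rw [hcomp]
  exact h.comp hσinj
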